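/- arXiv:1710.10682 — 4 statements merged into one kernel-verified Lean document; each statement's English description precedes it below -/
import Mathlib

section
/- Suppose J₁, …, J_n are transverse Jacobi solutions whose values J₁(t), …, J_n(t) are linearly independent vectors in ℝ^n for every t ∈ (0,a] (i.e., there are no focal points on (0,a]). Let X(t) = Σᵢ fⁱ(t)Jᵢ(t), where the functions fⁱ : [0,a] → ℝ are piecewise smooth and satisfy fⁱ(a) = 0 for all i. Then I(X,X) ≥ 0, with equality if and only if X vanishes identically. -/
open scoped RealInnerProductSpace
open MeasureTheory

set_option maxHeartbeats 1000000

/-- A transverse Jacobi solution on `[0, a]`: a `C²` curve `J` (with derivative `J'`)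
satisfying `J'' + R(t) J = 0`, `J(0) ∈ V₀`, and `⟨J'(0), w⟩ = −h(J(0), w)` for all `w ∈ V₀`. -/
structure TransverseJacobi (n : ℕ) (a : ℝ)
    (R : ℝ → EuclideanSpace ℝ (Fin n) →L[ℝ] EuclideanSpace ℝ (Fin n))
    (V₀ : Submodule ℝ (EuclideanSpace ℝ (Fin n)))
    (h : EuclideanSpace ℝ (Fin n) →ₗ[ℝ] EuclideanSpace ℝ (Fin n) →ₗ[ℝ] ℝ) where
  J : ℝ → EuclideanSpace ℝ (Fin n)
  J' : ℝ → EuclideanSpace ℝ (Fin n)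
  hasDeriv : ∀ t ∈ Set.Icc 0 a, HasDerivWithinAt J (J' t) (Set.Icc 0 a) t
  hasDeriv' : ∀ t ∈ Set.Icc 0 a, HasDerivWithinAt J' (-(R t (J t))) (Set.Icc 0 a) t
  init_mem : J 0 ∈ V₀
  init_deriv : ∀ w ∈ V₀, ⟪J' 0, w⟫ = - h (J 0) w

/-- The index form
`I(X, Y) := −h(X(0), Y(0)) + ∫₀ᵃ (⟨X'(t), Y'(t)⟩ − ⟨R(t) X(t), Y(t)⟩) dt`. -/
noncomputable def indexForm (n : ℕ) (a : ℝ)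
    (R : ℝ → EuclideanSpace ℝ (Fin n) →L[ℝ] EuclideanSpace ℝ (Fin n))
    (h : EuclideanSpace ℝ (Fin n) →ₗ[ℝ] EuclideanSpace ℝ (Fin n) →ₗ[ℝ] ℝ)
    (X X' Y Y' : ℝ → EuclideanSpace ℝ (Fin n)) : ℝ :=
  - h (X 0) (Y 0) + ∫ t in (0:ℝ)..a, (⟪X' t, Y' t⟫ - ⟪R t (X t), Y t⟫)

/-- Paper's Lemma 3.5: if `J₁, …, J_n` are transverse Jacobi solutions whose values are linearly
independent for every `t ∈ (0, a]` (no focal points), and `X = ∑ᵢ fⁱ Jᵢ` with `fⁱ` piecewise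
smooth and `fⁱ(a) = 0`, then `I(X, X) ≥ 0`, with equality iff `X` vanishes identically. -/
theorem index_nonneg_of_no_focal_points
    {n : ℕ} {a : ℝ} (ha : 0 < a)
    (R : ℝ → EuclideanSpace ℝ (Fin n) →L[ℝ] EuclideanSpace ℝ (Fin n))
    (hRcont : ContinuousOn R (Set.Icc 0 a))
    (hRsym : ∀ t ∈ Set.Icc 0 a, ∀ x y : EuclideanSpace ℝ (Fin n), ⟪R t x, y⟫ = ⟪x, R t y⟫)
    (V₀ : Submodule ℝ (EuclideanSpace ℝ (Fin n)))
    (h : EuclideanSpace ℝ (Fin n) →ₗ[ℝ] EuclideanSpace ℝ (Fin n) →ₗ[ℝ] ℝ)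
    (hsym : ∀ x ∈ V₀, ∀ y ∈ V₀, h x y = h y x)
    (J : Fin n → TransverseJacobi n a R V₀ h)
    (hindep : ∀ t ∈ Set.Ioc 0 a, LinearIndependent ℝ (fun i => (J i).J t))
    (f f' : Fin n → ℝ → ℝ) (T : Finset ℝ)
    (hfcont : ∀ i, ContinuousOn (f i) (Set.Icc 0 a))
    (hfderiv : ∀ i, ∀ t ∈ Set.Icc 0 a \ (T : Set ℝ),
      HasDerivWithinAt (f i) (f' i t) (Set.Icc 0 a) t)
    (hfint : ∀ i, IntervalIntegrable (fun t => (f' i t) ^ 2) volume 0 a)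
    (hfa : ∀ i, f i a = 0)
    (X X' : ℝ → EuclideanSpace ℝ (Fin n))
    (hX : ∀ t, X t = ∑ i, f i t • (J i).J t)
    (hX' : ∀ t, X' t = ∑ i, (f' i t • (J i).J t + f i t • (J i).J' t)) :
    0 ≤ indexForm n a R h X X' X X' ∧
      (indexForm n a R h X X' X X' = 0 ↔ ∀ t ∈ Set.Icc 0 a, X t = 0) := by
  classical
  have h0Icc : (0:ℝ) ∈ Set.Icc 0 a := ⟨le_refl 0, ha.le⟩
  have hJc : ∀ i, ContinuousOn (J i).J (Set.Icc 0 a) :=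
    fun i t ht => ((J i).hasDeriv t ht).continuousWithinAt
  have hJ'c : ∀ i, ContinuousOn (J i).J' (Set.Icc 0 a) :=
    fun i t ht => ((J i).hasDeriv' t ht).continuousWithinAt
  -- Lagrange identity
  have lag : ∀ t ∈ Set.Icc 0 a, ∀ i j : Fin n,
      ⟪(J i).J' t, (J j).J t⟫ = ⟪(J i).J t, (J j).J' t⟫ := by
    intro t ht i j
    set g : ℝ → ℝ :=
      fun s => ⟪(J i).J' s, (J j).J s⟫ - ⟪(J i).J s, (J j).J' s⟫ with hgdef
    have hgc : ContinuousOn g (Set.Icc 0 a) :=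
      ((hJ'c i).inner (hJc j)).sub ((hJc i).inner (hJ'c j))
    have hgd : ∀ x ∈ Set.Ico 0 a, HasDerivWithinAt g 0 (Set.Ici x) x := by
      intro x hx
      have hx' : x ∈ Set.Icc 0 a := ⟨hx.1, hx.2.le⟩
      have h1 := HasDerivWithinAt.inner ℝ ((J i).hasDeriv' x hx') ((J j).hasDeriv x hx')
      have h2 := HasDerivWithinAt.inner ℝ ((J i).hasDeriv x hx') ((J j).hasDeriv' x hx')
      have hd : HasDerivWithinAt g
          ((⟪(J i).J' x, (J j).J' x⟫ + ⟪-(R x ((J i).J x)), (J j).J x⟫)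
            - (⟪(J i).J x, -(R x ((J j).J x))⟫ + ⟪(J i).J' x, (J j).J' x⟫))
          (Set.Icc 0 a) x := h1.sub h2
      have hval : (⟪(J i).J' x, (J j).J' x⟫ + ⟪-(R x ((J i).J x)), (J j).J x⟫)
            - (⟪(J i).J x, -(R x ((J j).J x))⟫ + ⟪(J i).J' x, (J j).J' x⟫) = 0 := by
        have hR := hRsym x hx' ((J i).J x) ((J j).J x)
        simp only [inner_neg_left, inner_neg_right]
        linarith
      rw [hval] at hd
      refine hd.mono_of_mem_nhdsWithin ?_
      have h1' : Set.Ici x ∩ Set.Iio a ⊆ Set.Icc 0 a := by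
        intro y hy
        exact ⟨le_trans hx.1 hy.1, hy.2.le⟩
      exact Filter.mem_of_superset
        (Filter.inter_mem self_mem_nhdsWithin
          (nhdsWithin_le_nhds (Iio_mem_nhds hx.2))) h1'
    have hg0 : g 0 = 0 := by
      have h1 : ⟪(J i).J' 0, (J j).J 0⟫ = - h ((J i).J 0) ((J j).J 0) :=
        (J i).init_deriv _ (J j).init_mem
      have h2 : ⟪(J i).J 0, (J j).J' 0⟫ = - h ((J j).J 0) ((J i).J 0) := by
        rw [real_inner_comm]; exact (J j).init_deriv _ (J i).init_mem
      simp only [hgdef, h1, h2, hsym _ ((J i).init_mem) _ ((J j).init_mem)]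
      ring
    have hgt := constant_of_has_deriv_right_zero hgc hgd t ht
    rw [hg0] at hgt
    have : ⟪(J i).J' t, (J j).J t⟫ - ⟪(J i).J t, (J j).J' t⟫ = 0 := hgt
    linarith
  -- the two pieces of X'
  set Y : ℝ → EuclideanSpace ℝ (Fin n) := fun t => ∑ i, f' i t • (J i).J t with hYdef
  set Z : ℝ → EuclideanSpace ℝ (Fin n) := fun t => ∑ i, f i t • (J i).J' t with hZdef
  have hXZ : ∀ t, X' t = Y t + Z t := by
    intro t; rw [hX' t, Finset.sum_add_distrib]
  have hXfun : X = fun t => ∑ i, f i t • (J i).J t := funext hX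
  have hXc : ContinuousOn X (Set.Icc 0 a) := by
    rw [hXfun]
    exact continuousOn_finset_sum _ fun i _ => (hfcont i).smul (hJc i)
  have hZc : ContinuousOn Z (Set.Icc 0 a) :=
    continuousOn_finset_sum _ fun i _ => (hfcont i).smul (hJ'c i)
  -- bounds
  obtain ⟨C, hC⟩ := (isCompact_Icc : IsCompact (Set.Icc (0:ℝ) a)).exists_bound_of_continuousOn
    (continuousOn_finset_sum (Finset.univ) (fun i _ => (hJc i).norm))
  have hJb : ∀ i, ∀ t ∈ Set.Icc 0 a, ‖(J i).J t‖ ≤ C := by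
    intro i t ht
    calc ‖(J i).J t‖ ≤ ∑ j, ‖(J j).J t‖ :=
          Finset.single_le_sum (f := fun j => ‖(J j).J t‖)
            (fun j _ => norm_nonneg _) (Finset.mem_univ i)
      _ ≤ ‖∑ j, ‖(J j).J t‖‖ := le_abs_self _
      _ ≤ C := hC t ht
  obtain ⟨C₂, hC₂⟩ := (isCompact_Icc : IsCompact (Set.Icc (0:ℝ) a)).exists_bound_of_continuousOn hZc
  -- a.e. measurability of f'
  have hTnull : (volume : Measure ℝ) (↑T : Set ℝ) = 0 := (T.finite_toSet).measure_zero _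
  have haenT : ∀ᵐ t ∂(volume : Measure ℝ).restrict (Set.Ioc 0 a), t ∉ (↑T : Set ℝ) :=
    ae_restrict_of_ae (measure_eq_zero_iff_ae_notMem.mp hTnull)
  have haene : ∀ᵐ t ∂(volume : Measure ℝ).restrict (Set.Ioc 0 a), t ≠ a := by
    refine ae_restrict_of_ae ?_
    have : (volume : Measure ℝ) {a} = 0 := measure_singleton a
    filter_upwards [measure_eq_zero_iff_ae_notMem.mp this] with t ht
    simpa using ht
  have haedif : ∀ᵐ t ∂(volume : Measure ℝ).restrict (Set.Ioc 0 a),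
      t ∈ Set.Ioo 0 a \ (↑T : Set ℝ) := by
    filter_upwards [haenT, haene, ae_restrict_mem measurableSet_Ioc] with t h1 h2 h3
    exact ⟨⟨h3.1, lt_of_le_of_ne h3.2 h2⟩, h1⟩
  have hderAt : ∀ i, ∀ t ∈ Set.Ioo 0 a \ (↑T : Set ℝ), HasDerivAt (f i) (f' i t) t := by
    intro i t ht
    exact (hfderiv i t ⟨⟨ht.1.1.le, ht.1.2.le⟩, ht.2⟩).hasDerivAt
      (Icc_mem_nhds ht.1.1 ht.1.2)
  have hf'meas : ∀ i, AEMeasurable (f' i) ((volume : Measure ℝ).restrict (Set.Ioc 0 a)) := by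
    intro i
    refine (measurable_derivWithin_Ici (f i)).aemeasurable.congr ?_
    filter_upwards [haedif] with t ht
    exact ((hderAt i t ht).hasDerivWithinAt.derivWithin
      (uniqueDiffOn_Ici t t Set.self_mem_Ici))
  have hJmeas : ∀ i, AEMeasurable (J i).J ((volume : Measure ℝ).restrict (Set.Ioc 0 a)) :=
    fun i => ((hJc i).mono Set.Ioc_subset_Icc_self).aemeasurable measurableSet_Ioc
  have hYmeas : AEMeasurable Y ((volume : Measure ℝ).restrict (Set.Ioc 0 a)) := by
    rw [hYdef]
    exact Finset.aemeasurable_fun_sum _ fun i _ => (hf'meas i).smul (hJmeas i)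
  have hZmeas : AEMeasurable Z ((volume : Measure ℝ).restrict (Set.Ioc 0 a)) :=
    (hZc.mono Set.Ioc_subset_Icc_self).aemeasurable measurableSet_Ioc
  have hX'meas : AEMeasurable X' ((volume : Measure ℝ).restrict (Set.Ioc 0 a)) := by
    have : X' = fun t => Y t + Z t := funext hXZ
    rw [this]
    exact hYmeas.add hZmeas
  -- integrability
  have hsum_int : IntegrableOn (fun t => ∑ i, (f' i t)^2) (Set.Ioc 0 a) volume := by
    have := IntervalIntegrable.sum (Finset.univ) (fun i _ => hfint i)
    rw [intervalIntegrable_iff, Set.uIoc_of_le ha.le] at this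
    have h2 : (fun t => ∑ i, (f' i t)^2) = (∑ i : Fin n, fun t => (f' i t)^2) := by
      funext t; simp
    rw [h2]
    exact this
  have hdom : IntegrableOn (fun t => C^2 * n * ∑ i, (f' i t)^2) (Set.Ioc 0 a) volume :=
    hsum_int.const_mul _
  have hYbound : ∀ t ∈ Set.Icc 0 a, ‖Y t‖^2 ≤ C^2 * n * ∑ i, (f' i t)^2 := by
    intro t ht
    have h1 : ‖Y t‖ ≤ ∑ i, |f' i t| * C := by
      rw [hYdef]
      refine le_trans (norm_sum_le _ _) (Finset.sum_le_sum fun i _ => ?_)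
      rw [norm_smul, Real.norm_eq_abs]
      exact mul_le_mul_of_nonneg_left (hJb i t ht) (abs_nonneg _)
    have h2 : (∑ i, |f' i t| * C)^2 ≤ (n : ℝ) * ∑ i, (|f' i t| * C)^2 := by
      have := sq_sum_le_card_mul_sum_sq (s := (Finset.univ : Finset (Fin n)))
        (f := fun i => |f' i t| * C)
      simpa using this
    calc ‖Y t‖^2 ≤ (∑ i, |f' i t| * C)^2 := by
          have h0 : (0:ℝ) ≤ ∑ i, |f' i t| * C := le_trans (norm_nonneg _) h1
          nlinarith [norm_nonneg (Y t)]
      _ ≤ (n:ℝ) * ∑ i, (|f' i t| * C)^2 := h2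
      _ = C^2 * n * ∑ i, (f' i t)^2 := by
          simp only [mul_pow, sq_abs]
          rw [← Finset.sum_mul]
          ring
  have hQint : IntegrableOn (fun t => ⟪Y t, Y t⟫) (Set.Ioc 0 a) volume := by
    refine Integrable.mono' hdom (hYmeas.inner hYmeas).aestronglyMeasurable ?_
    filter_upwards [ae_restrict_mem measurableSet_Ioc] with t ht
    have hYt : ⟪Y t, Y t⟫ = ‖Y t‖^2 := real_inner_self_eq_norm_sq _
    rw [Real.norm_eq_abs, hYt, abs_of_nonneg (by positivity)]
    exact hYbound t (Set.Ioc_subset_Icc_self ht)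
  have hRXc : ContinuousOn (fun t => ⟪R t (X t), X t⟫ : ℝ → ℝ) (Set.Icc 0 a) :=
    (hRcont.clm_apply hXc).inner hXc
  have hRXint : IntegrableOn (fun t => ⟪R t (X t), X t⟫) (Set.Ioc 0 a) volume :=
    (hRXc.integrableOn_compact isCompact_Icc).mono_set Set.Ioc_subset_Icc_self
  have hX'int : IntegrableOn (fun t => ⟪X' t, X' t⟫) (Set.Ioc 0 a) volume := by
    have hg1 : IntegrableOn (fun t => 2*(C^2*(n:ℝ)*∑ i, (f' i t)^2)) (Set.Ioc 0 a) volume :=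
      hdom.const_mul 2
    have hg2 : IntegrableOn (fun _ : ℝ => 2*C₂^2) (Set.Ioc 0 a) volume :=
      integrableOn_const measure_Ioc_lt_top.ne
    have hg : IntegrableOn (fun t => 2*(C^2*(n:ℝ)*∑ i, (f' i t)^2) + 2*C₂^2)
        (Set.Ioc 0 a) volume := hg1.add hg2
    refine Integrable.mono' hg (hX'meas.inner hX'meas).aestronglyMeasurable ?_
    filter_upwards [ae_restrict_mem measurableSet_Ioc] with t ht
    have htIcc : t ∈ Set.Icc 0 a := Set.Ioc_subset_Icc_self ht
    have hXt : ⟪X' t, X' t⟫ = ‖X' t‖^2 := real_inner_self_eq_norm_sq _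
    rw [Real.norm_eq_abs, hXt, abs_of_nonneg (by positivity)]
    have h3 : ‖X' t‖ ≤ ‖Y t‖ + ‖Z t‖ := by rw [hXZ t]; exact norm_add_le _ _
    have hYb := hYbound t htIcc
    have hZb := hC₂ t htIcc
    nlinarith [norm_nonneg (X' t), norm_nonneg (Y t), norm_nonneg (Z t),
      sq_nonneg (‖Y t‖ - ‖Z t‖)]
  have hQint' : IntervalIntegrable (fun t => ⟪Y t, Y t⟫) volume 0 a := by
    rw [intervalIntegrable_iff, Set.uIoc_of_le ha.le]; exact hQint
  have hPint : IntervalIntegrable (fun t => ⟪X' t, X' t⟫ - ⟪R t (X t), X t⟫) volume 0 a := by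
    rw [intervalIntegrable_iff, Set.uIoc_of_le ha.le]; exact hX'int.sub hRXint
  have hDint : IntervalIntegrable
      (fun t => (⟪X' t, X' t⟫ - ⟪R t (X t), X t⟫) - ⟪Y t, Y t⟫) volume 0 a :=
    hPint.sub hQint'
  -- the derivative of φ
  set φ : ℝ → ℝ := fun t => ⟪X t, Z t⟫ with hφdef
  have hφc : ContinuousOn φ (Set.Icc 0 a) := hXc.inner hZc
  have hφd : ∀ t ∈ Set.Ioo 0 a \ (↑T : Set ℝ),
      HasDerivAt φ ((⟪X' t, X' t⟫ - ⟪R t (X t), X t⟫) - ⟪Y t, Y t⟫) t := by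
    intro t ht
    obtain ⟨htI, htT⟩ := ht
    have htIcc : t ∈ Set.Icc 0 a := ⟨htI.1.le, htI.2.le⟩
    have hnhds : Set.Icc 0 a ∈ nhds t := Icc_mem_nhds htI.1 htI.2
    have hfd : ∀ i, HasDerivAt (f i) (f' i t) t := fun i => hderAt i t ⟨htI, htT⟩
    have hJd : ∀ i, HasDerivAt (J i).J ((J i).J' t) t :=
      fun i => ((J i).hasDeriv t htIcc).hasDerivAt hnhds
    have hJ'd : ∀ i, HasDerivAt (J i).J' (-(R t ((J i).J t))) t :=
      fun i => ((J i).hasDeriv' t htIcc).hasDerivAt hnhds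
    have hXd : HasDerivAt X (X' t) t := by
      rw [hXfun, hX' t]
      have hs := HasDerivAt.fun_sum (fun i (_ : i ∈ Finset.univ) => (hfd i).smul (hJd i))
      refine hs.congr_deriv ?_
      exact Finset.sum_congr rfl fun i _ => add_comm _ _
    have hZd : HasDerivAt Z
        (∑ i, (f' i t • (J i).J' t + f i t • (-(R t ((J i).J t))))) t := by
      rw [hZdef]
      have hs := HasDerivAt.fun_sum (fun i (_ : i ∈ Finset.univ) => (hfd i).smul (hJ'd i))
      refine hs.congr_deriv ?_
      exact Finset.sum_congr rfl fun i _ => add_comm _ _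
    have hφd' : HasDerivAt φ
        (⟪X t, ∑ i, (f' i t • (J i).J' t + f i t • (-(R t ((J i).J t))))⟫ + ⟪X' t, Z t⟫) t :=
      HasDerivAt.inner ℝ hXd hZd
    convert hφd' using 1
    have hsplit : (∑ i, (f' i t • (J i).J' t + f i t • (-(R t ((J i).J t)))))
        = (∑ i, f' i t • (J i).J' t) - R t (X t) := by
      rw [Finset.sum_add_distrib, hX t, sub_eq_add_neg]
      congr 1
      rw [map_sum, ← Finset.sum_neg_distrib]
      refine Finset.sum_congr rfl fun i _ => ?_
      rw [(R t).map_smul, smul_neg]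
    rw [hsplit, inner_sub_right]
    have hcross : ⟪X t, ∑ i, f' i t • (J i).J' t⟫ = ⟪Z t, Y t⟫ := by
      rw [hX t, hZdef, hYdef]
      simp only [sum_inner, inner_sum, real_inner_smul_left, real_inner_smul_right]
      refine Finset.sum_congr rfl fun i _ => ?_
      refine Finset.sum_congr rfl fun j _ => ?_
      rw [lag t htIcc j i]
    rw [hcross, hXZ t]
    simp only [inner_add_left, inner_add_right]
    rw [real_inner_comm (X t) (R t (X t)), real_inner_comm (Z t) (Y t)]
    ring
  -- FTC
  have hFTC : ∫ t in (0:ℝ)..a, ((⟪X' t, X' t⟫ - ⟪R t (X t), X t⟫) - ⟪Y t, Y t⟫)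
      = φ a - φ 0 :=
    MeasureTheory.integral_eq_of_hasDerivAt_off_countable_of_le φ _ ha.le
      (T.countable_toSet) hφc hφd hDint
  have hXa : X a = 0 := by rw [hX a]; simp [hfa]
  have hφa : φ a = 0 := by rw [hφdef]; simp only [hXa, inner_zero_left]
  have hX0 : X 0 ∈ V₀ := by
    rw [hX 0]; exact Submodule.sum_smul_mem V₀ _ (fun i _ => (J i).init_mem)
  have hφ0 : φ 0 = - h (X 0) (X 0) := by
    have h1 : φ 0 = ∑ i, f i 0 * ⟪(J i).J' 0, X 0⟫ := by
      simp only [hφdef, hZdef]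
      rw [inner_sum]
      refine Finset.sum_congr rfl fun i _ => ?_
      rw [real_inner_smul_right, real_inner_comm]
    have h2 : ∀ i, ⟪(J i).J' 0, X 0⟫ = - h ((J i).J 0) (X 0) :=
      fun i => (J i).init_deriv _ hX0
    have h3 : h (X 0) (X 0) = ∑ i, f i 0 * (h ((J i).J 0) (X 0)) := by
      calc h (X 0) (X 0) = h (X 0) (∑ i, f i 0 • (J i).J 0) := by rw [← hX 0]
        _ = ∑ i, h (X 0) (f i 0 • (J i).J 0) := map_sum _ _ _
        _ = ∑ i, f i 0 * h ((J i).J 0) (X 0) := Finset.sum_congr rfl fun i _ => by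
              rw [(h (X 0)).map_smul, smul_eq_mul, hsym _ hX0 _ ((J i).init_mem)]
    rw [h1]
    simp only [h2]
    rw [h3, ← Finset.sum_neg_distrib]
    exact Finset.sum_congr rfl fun i _ => by ring
  -- the key identity
  have hIQ : indexForm n a R h X X' X X' = ∫ t in (0:ℝ)..a, ⟪Y t, Y t⟫ := by
    have hsplit : (fun t => (⟪X' t, X' t⟫ - ⟪R t (X t), X t⟫))
        = fun t => ⟪Y t, Y t⟫ + ((⟪X' t, X' t⟫ - ⟪R t (X t), X t⟫) - ⟪Y t, Y t⟫) := by
      funext t; ring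
    rw [indexForm, hsplit, intervalIntegral.integral_add hQint' hDint, hFTC, hφa, hφ0]
    ring
  have hnonneg : 0 ≤ ∫ t in (0:ℝ)..a, ⟪Y t, Y t⟫ :=
    intervalIntegral.integral_nonneg ha.le (fun t _ => real_inner_self_nonneg)
  refine ⟨by rw [hIQ]; exact hnonneg, ?_, ?_⟩
  · -- equality implies X vanishes
    intro h0
    rw [hIQ, intervalIntegral.integral_of_le ha.le] at h0
    have hQ0 : (fun t => ⟪Y t, Y t⟫) =ᵐ[(volume : Measure ℝ).restrict (Set.Ioc 0 a)] 0 :=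
      (integral_eq_zero_iff_of_nonneg_ae
        (Filter.Eventually.of_forall fun t => real_inner_self_nonneg) hQint).mp h0
    have hf'0 : ∀ᵐ t ∂(volume : Measure ℝ).restrict (Set.Ioc 0 a), ∀ i, f' i t = 0 := by
      filter_upwards [hQ0, ae_restrict_mem measurableSet_Ioc] with t hQt ht
      intro i
      have hY0 : Y t = 0 := by
        have : ⟪Y t, Y t⟫ = 0 := hQt
        exact inner_self_eq_zero.mp this
      rw [hYdef] at hY0
      exact linearIndependent_iff'.mp (hindep t ht) Finset.univ _ hY0 i (Finset.mem_univ i)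
    intro t ht
    rw [hX t]
    have hfi0 : ∀ i, f i t = 0 := by
      intro i
      have hae : f' i =ᵐ[(volume : Measure ℝ).restrict (Set.Ioc t a)] 0 := by
        have hsub : Set.Ioc t a ⊆ Set.Ioc 0 a := Set.Ioc_subset_Ioc_left ht.1
        filter_upwards [ae_restrict_of_ae_restrict_of_subset hsub hf'0] with s hs
        exact hs i
      have hint : IntervalIntegrable (f' i) volume t a := by
        rw [intervalIntegrable_iff, Set.uIoc_of_le ht.2]
        exact (integrable_zero _ _ _).congr hae.symm
      have hd : ∀ x ∈ Set.Ioo t a \ (↑T : Set ℝ), HasDerivAt (f i) (f' i x) x := by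
        intro x hx
        exact hderAt i x ⟨⟨lt_of_le_of_lt ht.1 hx.1.1, hx.1.2⟩, hx.2⟩
      have hFTCt := MeasureTheory.integral_eq_of_hasDerivAt_off_countable_of_le
        (f i) (f' i) ht.2 T.countable_toSet
        ((hfcont i).mono (Set.Icc_subset_Icc ht.1 le_rfl)) hd hint
      have hzero : ∫ x in t..a, f' i x = 0 := by
        rw [intervalIntegral.integral_of_le ht.2]
        exact integral_eq_zero_of_ae hae
      rw [hzero, hfa i] at hFTCt
      linarith
    simp [hfi0]
  · -- X vanishes implies equality
    intro hXzero
    rw [hIQ]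
    have hf0 : ∀ i, ∀ s ∈ Set.Ioc 0 a, f i s = 0 := by
      intro i s hs
      have hXs : ∑ j, f j s • (J j).J s = 0 := by
        rw [← hX s]; exact hXzero s ⟨hs.1.le, hs.2⟩
      exact linearIndependent_iff'.mp (hindep s hs) Finset.univ _ hXs i (Finset.mem_univ i)
    have hQ0 : ∀ t ∈ Set.Ioo 0 a \ (↑T : Set ℝ), ⟪Y t, Y t⟫ = (0:ℝ) := by
      intro t ht
      have hfd : ∀ i, f' i t = 0 := by
        intro i
        have hder : HasDerivAt (f i) (f' i t) t := hderAt i t ht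
        have hloc : (fun _ : ℝ => (0:ℝ)) =ᶠ[nhds t] f i := by
          filter_upwards [Ioo_mem_nhds ht.1.1 ht.1.2] with s hs
          exact (hf0 i s ⟨hs.1, hs.2.le⟩).symm
        have h0d : HasDerivAt (fun _ : ℝ => (0:ℝ)) (f' i t) t :=
          hder.congr_of_eventuallyEq hloc
        exact ((hasDerivAt_const t (0:ℝ)).unique h0d).symm
      have : Y t = 0 := by rw [hYdef]; simp [hfd]
      rw [this]; simp
    rw [intervalIntegral.integral_of_le ha.le]
    apply integral_eq_zero_of_ae
    filter_upwards [haedif] with t ht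
    exact hQ0 t ht
end

section
/- Suppose some nontrivial transverse Jacobi solution vanishes at a point t₀ with 0 < t₀ < a. Then there exists a piecewise-C¹ curve U : [0,a] → ℝ^n with U(0) ∈ V₀ and U(a) = 0 such that I(U,U) < 0. -/
open scoped RealInnerProductSpace
open MeasureTheory

section Aux
open Set
open scoped NNReal

local notation "E" n => EuclideanSpace ℝ (Fin n)

/-- Uniqueness for the second order linear ODE: if a solution and its derivative vanish at an
interior point, the solution vanishes identically on `Icc 0 a`. -/
lemma jacobi_vanish {n : ℕ} {a : ℝ}
    (R : ℝ → (E n) →L[ℝ] (E n)) (hRcont : ContinuousOn R (Set.Icc 0 a))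
    {J J' : ℝ → E n}
    (hd : ∀ t ∈ Set.Icc 0 a, HasDerivWithinAt J (J' t) (Set.Icc 0 a) t)
    (hd' : ∀ t ∈ Set.Icc 0 a, HasDerivWithinAt J' (-(R t (J t))) (Set.Icc 0 a) t)
    {t₀ : ℝ} (ht₀ : t₀ ∈ Set.Ioo 0 a) (h0 : J t₀ = 0) (h1 : J' t₀ = 0) :
    ∀ s ∈ Set.Icc 0 a, J s = 0 := by
  have ha : 0 < a := ht₀.1.trans ht₀.2
  obtain ⟨C, hC⟩ := isCompact_Icc.exists_bound_of_continuousOn hRcont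
  set Cm : ℝ := max C 1 with hCm
  have hCm1 : (1:ℝ) ≤ Cm := le_max_right _ _
  have hCm0 : (0:ℝ) ≤ Cm := le_trans zero_le_one hCm1
  set clamp : ℝ → ℝ := fun t => max 0 (min t a) with hclampdef
  have hclamp_mem : ∀ t, clamp t ∈ Set.Icc 0 a := fun t =>
    ⟨le_max_left _ _, max_le ha.le (min_le_right t a)⟩
  have hclamp_eq : ∀ t ∈ Set.Icc 0 a, clamp t = t := by
    intro t ht
    simp only [hclampdef]
    rw [min_eq_left ht.2, max_eq_right ht.1]
  set v : ℝ → ((E n) × (E n)) → ((E n) × (E n)) :=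
    fun t p => (p.2, -(R (clamp t) p.1)) with hvdef
  have hlip : ∀ t, LipschitzWith (Real.toNNReal Cm) (v t) := by
    intro t
    apply LipschitzWith.of_dist_le_mul
    intro p q
    have hcoe : ((Real.toNNReal Cm : ℝ≥0) : ℝ) = Cm := Real.coe_toNNReal _ hCm0
    rw [hcoe, Prod.dist_eq, Prod.dist_eq]
    have h2 : dist (v t p).2 (v t q).2 ≤ Cm * max (dist p.1 q.1) (dist p.2 q.2) := by
      simp only [hvdef]
      rw [dist_neg_neg, dist_eq_norm, ← map_sub]
      calc ‖R (clamp t) (p.1 - q.1)‖ ≤ ‖R (clamp t)‖ * ‖p.1 - q.1‖ :=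
            (R (clamp t)).le_opNorm _
        _ ≤ Cm * dist p.1 q.1 := by
            rw [← dist_eq_norm]
            exact mul_le_mul_of_nonneg_right
              ((hC _ (hclamp_mem t)).trans (le_max_left _ _)) dist_nonneg
        _ ≤ Cm * max (dist p.1 q.1) (dist p.2 q.2) :=
            mul_le_mul_of_nonneg_left (le_max_left _ _) hCm0
    have h1 : dist (v t p).1 (v t q).1 ≤ Cm * max (dist p.1 q.1) (dist p.2 q.2) := by
      simp only [hvdef]
      calc dist p.2 q.2 ≤ max (dist p.1 q.1) (dist p.2 q.2) := le_max_right _ _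
        _ ≤ Cm * max (dist p.1 q.1) (dist p.2 q.2) := by
            nlinarith [le_max_left (dist p.1 q.1) (dist p.2 q.2), dist_nonneg (x := p.1) (y := q.1),
              dist_nonneg (x := p.2) (y := q.2)]
    exact max_le h1 h2
  have hcont : ContinuousOn (fun t => (J t, J' t)) (Set.Icc 0 a) :=
    ContinuousOn.prodMk (fun t ht => (hd t ht).continuousWithinAt)
      (fun t ht => (hd' t ht).continuousWithinAt)
  have huniq : Set.EqOn (fun t => (J t, J' t)) (fun _ => ((0 : E n), (0 : E n)))
      (Set.Icc 0 a) := by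
    apply ODE_solution_unique_of_mem_Icc (v := v) (s := fun _ => Set.univ)
      (K := Real.toNNReal Cm) (fun t _ => (hlip t).lipschitzOnWith) ht₀ hcont
    · intro t ht
      have htI : t ∈ Set.Icc 0 a := Set.mem_Icc_of_Ioo ht
      have hmem : Set.Icc 0 a ∈ nhds t := Icc_mem_nhds ht.1 ht.2
      have hJ : HasDerivAt J (J' t) t := (hd t htI).hasDerivAt hmem
      have hJ' : HasDerivAt J' (-(R t (J t))) t := (hd' t htI).hasDerivAt hmem
      have := hJ.prodMk hJ'
      simpa only [hvdef, hclamp_eq t htI] using this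
    · exact fun t _ => Set.mem_univ _
    · exact continuousOn_const
    · intro t ht
      have : v t ((0 : E n), (0 : E n)) = ((0 : E n), (0 : E n)) := by
        simp [hvdef]
      rw [this]
      exact hasDerivAt_const _ _
    · exact fun t _ => Set.mem_univ _
    · show (J t₀, J' t₀) = (0, 0)
      rw [h0, h1]
  intro s hs
  have := huniq hs
  simpa using congrArg Prod.fst this

/-- Fundamental theorem of calculus for the inner-product pairing of two functions with
derivatives within `Icc 0 a`. -/
lemma ftc_inner {n : ℕ} {a t₀ : ℝ} (h0 : 0 ≤ t₀) (hta : t₀ ≤ a)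
    {f g f' g' : ℝ → E n}
    (hf : ∀ t ∈ Set.Icc 0 a, HasDerivWithinAt f (f' t) (Set.Icc 0 a) t)
    (hg : ∀ t ∈ Set.Icc 0 a, HasDerivWithinAt g (g' t) (Set.Icc 0 a) t)
    (hint : IntervalIntegrable (fun t => ⟪f t, g' t⟫ + ⟪f' t, g t⟫) volume 0 t₀) :
    ∫ t in (0:ℝ)..t₀, (⟪f t, g' t⟫ + ⟪f' t, g t⟫) = ⟪f t₀, g t₀⟫ - ⟪f 0, g 0⟫ := by
  have hsub : Set.Icc (0:ℝ) t₀ ⊆ Set.Icc 0 a := Set.Icc_subset_Icc le_rfl hta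
  apply intervalIntegral.integral_eq_sub_of_hasDeriv_right_of_le h0 _ _ hint
  · exact ContinuousOn.inner
      (fun t ht => ((hf t (hsub ht)).continuousWithinAt).mono hsub)
      (fun t ht => ((hg t (hsub ht)).continuousWithinAt).mono hsub)
  · intro t ht
    have htI : t ∈ Set.Icc 0 a := hsub (Set.mem_Icc_of_Ioo ht)
    have hmem : Set.Icc (0:ℝ) a ∈ nhds t := Icc_mem_nhds ht.1 (lt_of_lt_of_le ht.2 hta)
    have hft : HasDerivAt f (f' t) t := (hf t htI).hasDerivAt hmem
    have hgt : HasDerivAt g (g' t) t := (hg t htI).hasDerivAt hmem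
    exact (HasDerivAt.inner ℝ hft hgt).hasDerivWithinAt

end Aux

set_option maxHeartbeats 1000000 in
/-- Paper's Theorem 3.7: if some nontrivial transverse Jacobi solution vanishes at a point
`t₀ ∈ (0, a)`, then there is a piecewise-`C¹` curve `U` with `U(0) ∈ V₀` and `U(a) = 0`
such that `I(U, U) < 0`. -/
theorem index_neg_past_focal_point
    {n : ℕ} {a : ℝ} (ha : 0 < a)
    (R : ℝ → EuclideanSpace ℝ (Fin n) →L[ℝ] EuclideanSpace ℝ (Fin n))
    (hRcont : ContinuousOn R (Set.Icc 0 a))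
    (hRsym : ∀ t ∈ Set.Icc 0 a, ∀ x y : EuclideanSpace ℝ (Fin n), ⟪R t x, y⟫ = ⟪x, R t y⟫)
    (V₀ : Submodule ℝ (EuclideanSpace ℝ (Fin n)))
    (h : EuclideanSpace ℝ (Fin n) →ₗ[ℝ] EuclideanSpace ℝ (Fin n) →ₗ[ℝ] ℝ)
    (hsym : ∀ x ∈ V₀, ∀ y ∈ V₀, h x y = h y x)
    (K : TransverseJacobi n a R V₀ h)
    (hK_nontrivial : ∃ s ∈ Set.Icc 0 a, K.J s ≠ 0)
    (t₀ : ℝ) (ht₀ : t₀ ∈ Set.Ioo 0 a) (hKt₀ : K.J t₀ = 0) :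
    ∃ (U U' : ℝ → EuclideanSpace ℝ (Fin n)) (T : Finset ℝ),
      ContinuousOn U (Set.Icc 0 a) ∧
      (∀ t ∈ Set.Icc 0 a \ (T : Set ℝ), HasDerivWithinAt U (U' t) (Set.Icc 0 a) t) ∧
      IntervalIntegrable (fun t => ‖U' t‖ ^ 2) volume 0 a ∧
      U 0 ∈ V₀ ∧ U a = 0 ∧
      indexForm n a R h U U' U U' < 0 := by
  obtain ⟨ht₀0, ht₀a⟩ := ht₀
  have ht₀0' : (0:ℝ) ≤ t₀ := ht₀0.le
  have ht₀a' : t₀ ≤ a := ht₀a.le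
  have hsubL : Set.Icc (0:ℝ) t₀ ⊆ Set.Icc 0 a := Set.Icc_subset_Icc le_rfl ht₀a'
  have hsubR : Set.Icc t₀ a ⊆ Set.Icc 0 a := Set.Icc_subset_Icc ht₀0' le_rfl
  have hJcont : ContinuousOn K.J (Set.Icc 0 a) :=
    fun t ht => (K.hasDeriv t ht).continuousWithinAt
  have hJ'cont : ContinuousOn K.J' (Set.Icc 0 a) :=
    fun t ht => (K.hasDeriv' t ht).continuousWithinAt
  -- the derivative of the Jacobi field at the focal instant is nonzero
  have hw₀ : K.J' t₀ ≠ 0 := by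
    intro hw0
    obtain ⟨s, hs, hsne⟩ := hK_nontrivial
    exact hsne (jacobi_vanish R hRcont K.hasDeriv K.hasDeriv' ⟨ht₀0, ht₀a⟩ hKt₀ hw0 s hs)
  set w₀ : EuclideanSpace ℝ (Fin n) := K.J' t₀ with hw₀def
  have hw₀sq : 0 < ‖w₀‖^2 := by
    have := norm_pos_iff.mpr hw₀
    positivity
  -- the smooth correction field W
  set c : ℝ := t₀ * (a - t₀) with hcdef
  have hc : 0 < c := mul_pos ht₀0 (sub_pos.mpr ht₀a)
  set φ : ℝ → ℝ := fun t => t * (a - t) / c with hφdef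
  set φ' : ℝ → ℝ := fun t => (a - 2*t) / c with hφ'def
  have hφderiv : ∀ t, HasDerivAt φ (φ' t) t := by
    intro t
    have h1 : HasDerivAt (fun s : ℝ => s * (a - s)) (1 * (a - t) + t * (0 - 1)) t :=
      (hasDerivAt_id t).mul ((hasDerivAt_const t a).sub (hasDerivAt_id t))
    have h2 := h1.div_const c
    convert h2 using 1
    show (a - 2*t) / c = _
    ring
    all_goals rfl
  have hφcont : Continuous φ := by
    simp only [hφdef]
    exact (continuous_id.mul (continuous_const.sub continuous_id)).div_const c
  have hφ'cont : Continuous φ' := by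
    simp only [hφ'def]
    exact (continuous_const.sub (continuous_const.mul continuous_id)).div_const c
  set W : ℝ → EuclideanSpace ℝ (Fin n) := fun t => (-(φ t)) • w₀ with hWdef
  set W' : ℝ → EuclideanSpace ℝ (Fin n) := fun t => (-(φ' t)) • w₀ with hW'def
  have hWderiv : ∀ t, HasDerivAt W (W' t) t := fun t => ((hφderiv t).neg).smul_const w₀
  have hWcont : Continuous W := (hφcont.neg).smul continuous_const
  have hW'cont : Continuous W' := (hφ'cont.neg).smul continuous_const
  have hW0 : W 0 = 0 := by simp [hWdef, hφdef]
  have hWa : W a = 0 := by simp [hWdef, hφdef]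
  have hφt₀ : φ t₀ = 1 := by
    simp only [hφdef]
    rw [← hcdef, div_self hc.ne']
  have hWt₀ : W t₀ = -w₀ := by
    simp only [hWdef, hφt₀]
    simp
  -- abbreviations for the three integrands
  set A : ℝ → ℝ := fun t => ⟪K.J' t, K.J' t⟫ - ⟪R t (K.J t), K.J t⟫ with hAdef
  set B : ℝ → ℝ := fun t => ⟪K.J' t, W' t⟫ - ⟪R t (K.J t), W t⟫ with hBdef
  set q : ℝ → ℝ := fun t => ⟪W' t, W' t⟫ - ⟪R t (W t), W t⟫ with hqdef
  have hAcont : ContinuousOn A (Set.Icc 0 a) :=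
    (hJ'cont.inner hJ'cont).sub ((hRcont.clm_apply hJcont).inner hJcont)
  have hBcont : ContinuousOn B (Set.Icc 0 a) :=
    (hJ'cont.inner hW'cont.continuousOn).sub
      ((hRcont.clm_apply hJcont).inner hWcont.continuousOn)
  have hqcont : ContinuousOn q (Set.Icc 0 a) :=
    (hW'cont.continuousOn.inner hW'cont.continuousOn).sub
      ((hRcont.clm_apply hWcont.continuousOn).inner hWcont.continuousOn)
  -- FTC for the two base integrals
  have hA : ∫ t in (0:ℝ)..t₀, A t = - ⟪K.J' 0, K.J 0⟫ := by
    have heq : A = fun t => ⟪K.J' t, K.J' t⟫ + ⟪-(R t (K.J t)), K.J t⟫ := by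
      funext t
      rw [hAdef]
      simp [inner_neg_left, sub_eq_add_neg]
    rw [heq]
    rw [ftc_inner ht₀0' ht₀a' K.hasDeriv' K.hasDeriv ?hint]
    · rw [hKt₀]
      simp
    case hint =>
      apply ContinuousOn.intervalIntegrable
      rw [Set.uIcc_of_le ht₀0']
      have : ContinuousOn (fun t => ⟪K.J' t, K.J' t⟫ + ⟪-(R t (K.J t)), K.J t⟫)
          (Set.Icc 0 a) := by
        apply ContinuousOn.add (hJ'cont.inner hJ'cont)
        exact (((hRcont.clm_apply hJcont)).neg).inner hJcont
      exact this.mono hsubL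
  have hB' : ∫ t in (0:ℝ)..t₀, B t = - ‖w₀‖^2 := by
    have heq : B = fun t => ⟪K.J' t, W' t⟫ + ⟪-(R t (K.J t)), W t⟫ := by
      funext t
      rw [hBdef]
      simp [inner_neg_left, sub_eq_add_neg]
    rw [heq]
    have hgW : ∀ t ∈ Set.Icc 0 a, HasDerivWithinAt W (W' t) (Set.Icc 0 a) t :=
      fun t _ => (hWderiv t).hasDerivWithinAt
    rw [ftc_inner ht₀0' ht₀a' K.hasDeriv' hgW ?hint]
    · rw [hWt₀, hW0]
      rw [inner_neg_right, ← hw₀def, real_inner_self_eq_norm_sq]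
      simp
    case hint =>
      apply ContinuousOn.intervalIntegrable
      rw [Set.uIcc_of_le ht₀0']
      have : ContinuousOn (fun t => ⟪K.J' t, W' t⟫ + ⟪-(R t (K.J t)), W t⟫)
          (Set.Icc 0 a) := by
        apply ContinuousOn.add (hJ'cont.inner hW'cont.continuousOn)
        exact (((hRcont.clm_apply hJcont)).neg).inner hWcont.continuousOn
      exact this.mono hsubL
  -- the quadratic coefficient and the size of the perturbation
  set Cq : ℝ := (∫ t in (0:ℝ)..t₀, q t) + ∫ t in t₀..a, q t with hCqdef
  set ε : ℝ := min 1 (‖w₀‖^2 / (|Cq| + 1)) with hεdef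
  have hCq1 : (0:ℝ) < |Cq| + 1 := by positivity
  have hε0 : 0 < ε := lt_min one_pos (by positivity)
  have hε1 : ε ≤ 1 := min_le_left _ _
  have hε2 : ε * (|Cq| + 1) ≤ ‖w₀‖^2 := by
    rw [← le_div_iff₀ hCq1]
    exact min_le_right _ _
  -- the broken field and its perturbation
  set U₁ : ℝ → EuclideanSpace ℝ (Fin n) := fun t => if t ≤ t₀ then K.J t else 0 with hU₁def
  set U₁' : ℝ → EuclideanSpace ℝ (Fin n) := fun t => if t ≤ t₀ then K.J' t else 0 with hU₁'def
  set U : ℝ → EuclideanSpace ℝ (Fin n) := fun t => U₁ t + ε • W t with hUdef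
  set U' : ℝ → EuclideanSpace ℝ (Fin n) := fun t => U₁' t + ε • W' t with hU'def
  -- derivative off the break point
  have hUderiv : ∀ t ∈ Set.Icc 0 a, t ≠ t₀ → HasDerivWithinAt U (U' t) (Set.Icc 0 a) t := by
    intro t htI htne
    have hWd : HasDerivWithinAt (fun s => ε • W s) (ε • W' t) (Set.Icc 0 a) t :=
      ((hWderiv t).hasDerivWithinAt).const_smul ε
    rcases lt_or_gt_of_ne htne with hlt | hgt
    · have hmem : Set.Iio t₀ ∈ nhdsWithin t (Set.Icc 0 a) :=
        mem_nhdsWithin_of_mem_nhds (Iio_mem_nhds hlt)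
      have h1 : HasDerivWithinAt U₁ (K.J' t) (Set.Icc 0 a) t := by
        apply (K.hasDeriv t htI).congr_of_eventuallyEq
        · filter_upwards [hmem] with s hs
          simp [hU₁def, if_pos (le_of_lt (Set.mem_Iio.mp hs))]
        · simp [hU₁def, if_pos hlt.le]
      have : HasDerivWithinAt U (K.J' t + ε • W' t) (Set.Icc 0 a) t := h1.add hWd
      simpa only [hU'def, hU₁'def, if_pos hlt.le] using this
    · have hmem : Set.Ioi t₀ ∈ nhdsWithin t (Set.Icc 0 a) :=
        mem_nhdsWithin_of_mem_nhds (Ioi_mem_nhds hgt)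
      have h1 : HasDerivWithinAt U₁ 0 (Set.Icc 0 a) t := by
        apply (hasDerivWithinAt_const t (Set.Icc 0 a)
          (0 : EuclideanSpace ℝ (Fin n))).congr_of_eventuallyEq
        · filter_upwards [hmem] with s hs
          simp [hU₁def, if_neg (not_le.mpr (Set.mem_Ioi.mp hs))]
        · simp [hU₁def, if_neg (not_le.mpr hgt)]
      have : HasDerivWithinAt U (0 + ε • W' t) (Set.Icc 0 a) t := h1.add hWd
      simpa only [hU'def, hU₁'def, if_neg (not_le.mpr hgt), zero_add] using this
  -- continuity of U on [0, a]
  have hUcont : ContinuousOn U (Set.Icc 0 a) := by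
    intro x hx
    by_cases hxt : x = t₀
    · subst hxt
      apply ContinuousWithinAt.mono (t := (Set.Icc 0 a ∩ Set.Iic x) ∪ (Set.Icc 0 a ∩ Set.Ioi x))
      · apply ContinuousWithinAt.union
        · have hJx : ContinuousWithinAt K.J (Set.Icc 0 a ∩ Set.Iic x) x :=
            (hJcont x hx).mono Set.inter_subset_left
          have hU₁x : ContinuousWithinAt U₁ (Set.Icc 0 a ∩ Set.Iic x) x := by
            apply hJx.congr
            · intro y hy
              simp [hU₁def, if_pos (Set.mem_Iic.mp hy.2)]
            · simp [hU₁def, if_pos le_rfl]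
          exact hU₁x.add (((hWcont.continuousAt).continuousWithinAt).const_smul ε)
        · have hU₁x : ContinuousWithinAt U₁ (Set.Icc 0 a ∩ Set.Ioi x) x := by
            apply (continuousWithinAt_const (b := (0:EuclideanSpace ℝ (Fin n)))).congr
            · intro y hy
              simp [hU₁def, if_neg (not_le.mpr (Set.mem_Ioi.mp hy.2))]
            · simp [hU₁def, if_pos le_rfl, hKt₀]
          exact hU₁x.add (((hWcont.continuousAt).continuousWithinAt).const_smul ε)
      · intro y hy
        rcases le_or_gt y x with hyx | hyx
        · exact Or.inl ⟨hy, hyx⟩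
        · exact Or.inr ⟨hy, hyx⟩
    · exact (hUderiv x hx hxt).continuousWithinAt
  -- the pointwise form of the integrand on the two subintervals
  have hEqL : Set.EqOn (fun t => ⟪U' t, U' t⟫ - ⟪R t (U t), U t⟫)
      (fun t => A t + (2*ε) * B t + ε^2 * q t) (Set.uIcc 0 t₀) := by
    intro t ht
    rw [Set.uIcc_of_le ht₀0'] at ht
    have htI : t ∈ Set.Icc 0 a := hsubL ht
    have h1 : U t = K.J t + ε • W t := by simp only [hUdef, hU₁def, if_pos ht.2]
    have h2 : U' t = K.J' t + ε • W' t := by simp only [hU'def, hU₁'def, if_pos ht.2]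
    have hsymWJ : ⟪R t (W t), K.J t⟫ = ⟪R t (K.J t), W t⟫ := by
      rw [hRsym t htI (W t) (K.J t), real_inner_comm]
    simp only [h1, h2, hAdef, hBdef, hqdef, map_add, _root_.map_smul, inner_add_left, inner_add_right,
      real_inner_smul_left, real_inner_smul_right, smul_eq_mul]
    rw [real_inner_comm (W' t) (K.J' t), hsymWJ]
    ring
  have hEqR : ∀ t ∈ Set.Ioc t₀ a, (⟪U' t, U' t⟫ - ⟪R t (U t), U t⟫) = ε^2 * q t := by
    intro t ht
    have hnot : ¬ t ≤ t₀ := not_le.mpr ht.1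
    have h1 : U t = ε • W t := by simp only [hUdef, hU₁def, if_neg hnot, zero_add]
    have h2 : U' t = ε • W' t := by simp only [hU'def, hU₁'def, if_neg hnot, zero_add]
    simp only [h1, h2, hqdef, _root_.map_smul, real_inner_smul_left, real_inner_smul_right, smul_eq_mul]
    ring
  -- integrability on the two subintervals
  have hbaseL : ContinuousOn (fun t => A t + (2*ε) * B t + ε^2 * q t) (Set.Icc 0 a) :=
    (hAcont.add (continuousOn_const.mul hBcont)).add (continuousOn_const.mul hqcont)
  have hintL : IntervalIntegrable (fun t => ⟪U' t, U' t⟫ - ⟪R t (U t), U t⟫) volume 0 t₀ := by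
    rw [intervalIntegrable_iff_integrableOn_Icc_of_le ht₀0']
    apply IntegrableOn.congr_fun ((hbaseL.mono hsubL).integrableOn_Icc)
      (fun t ht => (hEqL (by rwa [Set.uIcc_of_le ht₀0'])).symm) measurableSet_Icc
  have hintR : IntervalIntegrable (fun t => ⟪U' t, U' t⟫ - ⟪R t (U t), U t⟫) volume t₀ a := by
    rw [intervalIntegrable_iff_integrableOn_Ioc_of_le ht₀a']
    apply IntegrableOn.congr_fun
      ((((continuousOn_const.mul hqcont).mono hsubR).integrableOn_Icc).mono_set
        Set.Ioc_subset_Icc_self)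
      (fun t ht => (hEqR t ht).symm) measurableSet_Ioc
  -- values of the two pieces
  have hIA : IntervalIntegrable A volume 0 t₀ := by
    apply ContinuousOn.intervalIntegrable
    rw [Set.uIcc_of_le ht₀0']
    exact hAcont.mono hsubL
  have hIB : IntervalIntegrable B volume 0 t₀ := by
    apply ContinuousOn.intervalIntegrable
    rw [Set.uIcc_of_le ht₀0']
    exact hBcont.mono hsubL
  have hIq : IntervalIntegrable q volume 0 t₀ := by
    apply ContinuousOn.intervalIntegrable
    rw [Set.uIcc_of_le ht₀0']
    exact hqcont.mono hsubL
  have hIL : ∫ t in (0:ℝ)..t₀, (⟪U' t, U' t⟫ - ⟪R t (U t), U t⟫)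
      = (- ⟪K.J' 0, K.J 0⟫) + (2*ε) * (-‖w₀‖^2) + ε^2 * ∫ t in (0:ℝ)..t₀, q t := by
    rw [intervalIntegral.integral_congr hEqL]
    rw [intervalIntegral.integral_add (hIA.add (hIB.const_mul _)) (hIq.const_mul _),
      intervalIntegral.integral_add hIA (hIB.const_mul _),
      intervalIntegral.integral_const_mul, intervalIntegral.integral_const_mul, hA, hB']
  have hIR : ∫ t in t₀..a, (⟪U' t, U' t⟫ - ⟪R t (U t), U t⟫)
      = ε^2 * ∫ t in t₀..a, q t := by
    rw [intervalIntegral.integral_congr_ae (Filter.Eventually.of_forall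
      (fun x hx => hEqR x (by rwa [Set.uIoc_of_le ht₀a'] at hx)))]
    exact intervalIntegral.integral_const_mul _ _
  have hsplit := intervalIntegral.integral_add_adjacent_intervals hintL hintR
  have hU0 : U 0 = K.J 0 := by
    simp only [hUdef, hU₁def, if_pos ht₀0', hW0, smul_zero, add_zero]
  -- assemble
  refine ⟨U, U', {t₀}, hUcont, ?_, ?_, ?_, ?_, ?_⟩
  · intro t ht
    exact hUderiv t ht.1 (by simpa using ht.2)
  · apply IntervalIntegrable.trans (b := t₀)
    · rw [intervalIntegrable_iff_integrableOn_Icc_of_le ht₀0']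
      apply IntegrableOn.congr_fun (f := fun t => ‖K.J' t + ε • W' t‖^2)
        ((((hJ'cont.add ((hW'cont.const_smul ε).continuousOn)).norm.pow 2).mono
          hsubL).integrableOn_Icc)
        (fun t ht => by simp only [hU'def, hU₁'def, if_pos ht.2]) measurableSet_Icc
    · rw [intervalIntegrable_iff_integrableOn_Ioc_of_le ht₀a']
      apply IntegrableOn.congr_fun (f := fun t => ‖ε • W' t‖^2)
        (((((hW'cont.const_smul ε).continuousOn.norm.pow 2).mono
          hsubR).integrableOn_Icc).mono_set Set.Ioc_subset_Icc_self)
        (fun t ht => by simp only [hU'def, hU₁'def, if_neg (not_le.mpr ht.1), zero_add])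
        measurableSet_Ioc
  · rw [hU0]
    exact K.init_mem
  · simp only [hUdef, hU₁def, if_neg (not_le.mpr ht₀a), hWa, smul_zero, add_zero, zero_add]
  · show - h (U 0) (U 0) + (∫ t in (0:ℝ)..a, (⟪U' t, U' t⟫ - ⟪R t (U t), U t⟫)) < 0
    rw [← hsplit, hIL, hIR, hU0, K.init_deriv (K.J 0) K.init_mem]
    have hCqeq : ε^2 * (∫ t in (0:ℝ)..t₀, q t) + ε^2 * (∫ t in t₀..a, q t) = ε^2 * Cq := by
      rw [hCqdef]; ring
    have h1 : ε * |Cq| ≤ ‖w₀‖^2 := by nlinarith [hε2, hε0]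
    have hfin : ε^2 * Cq ≤ ε * ‖w₀‖^2 := by
      calc ε^2 * Cq ≤ ε^2 * |Cq| :=
            mul_le_mul_of_nonneg_left (le_abs_self Cq) (sq_nonneg ε)
        _ = ε * (ε * |Cq|) := by ring
        _ ≤ ε * ‖w₀‖^2 := mul_le_mul_of_nonneg_left h1 hε0.le
    nlinarith [hfin, mul_pos hε0 hw₀sq]
end

section
/- Let V₀ ⊆ ℝ^{m-1} be a k-dimensional subspace (1 ≤ k ≤ m−1), S a symmetric endomorphism of V₀ with eigenvalues λ₁, …, λ_k (with multiplicity), and C : V₀ → V₀^⊥ any linear map. Let δ ∈ ℝ and let A_δ : ℝ → End(ℝ^{m-1}) be the solution of A''(t) + δ·A(t) = 0 with A(0) the orthogonal projection onto V₀, A'(0)v = −Sv + Cv for v ∈ V₀, and A'(0)w = w for w ∈ V₀^⊥. Then for all t, det A_δ(t) = 𝔰_δ(t)^{m−k−1} · ∏_{α=1}^{k} (𝔰'_δ(t) − λ_α·𝔰_δ(t)). -/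
open scoped RealInnerProductSpace

lemma const_of_hasDerivAt_zero {Y : Type*} [NormedAddCommGroup Y] [NormedSpace ℝ Y]
    (f : ℝ → Y) (hf : ∀ t, HasDerivAt f 0 t) (t : ℝ) : f t = f 0 :=
  is_const_of_deriv_eq_zero (fun x => (hf x).differentiableAt) (fun x => (hf x).deriv) t 0

/-- Uniqueness for the second-order linear ODE `g'' = -δ g` with zero initial data. -/
lemma ode_zero_unique {X : Type*} [NormedAddCommGroup X] [NormedSpace ℝ X]
    (δ : ℝ) (s s' : ℝ → ℝ)
    (hs : ∀ t, HasDerivAt s (s' t) t) (hs' : ∀ t, HasDerivAt s' (-δ * s t) t)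
    (hs0 : s 0 = 0) (hs'0 : s' 0 = 1)
    (g g' : ℝ → X) (hg : ∀ t, HasDerivAt g (g' t) t)
    (hg' : ∀ t, HasDerivAt g' (-δ • g t) t)
    (h0 : g 0 = 0) (h0' : g' 0 = 0) : ∀ t, g t = 0 := by
  have hconst : ∀ t, s' t ^ 2 + δ * s t ^ 2 = 1 := by
    intro t
    have hd : ∀ t, HasDerivAt (fun t => s' t ^ 2 + δ * s t ^ 2) 0 t := by
      intro t
      have := ((hs' t).pow 2).add (((hs t).pow 2).const_mul δ)
      exact this.congr_deriv (by norm_num; ring)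
    have := const_of_hasDerivAt_zero (fun t => s' t ^ 2 + δ * s t ^ 2) hd t
    simpa [hs0, hs'0] using this
  have h1 : ∀ t, s' t • g t - s t • g' t = 0 := by
    intro t
    have hd : ∀ t, HasDerivAt (fun t => s' t • g t - s t • g' t) 0 t := by
      intro t
      have := (((hs' t).smul (hg t)).sub ((hs t).smul (hg' t)))
      convert this using 1
      · rfl
      simp only [smul_smul]
      module
    have := const_of_hasDerivAt_zero (fun t => s' t • g t - s t • g' t) hd t
    simpa [h0, h0'] using this
  have h2 : ∀ t, (-δ * s t) • g t - s' t • g' t = 0 := by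
    intro t
    have hd : ∀ t, HasDerivAt (fun t => (-δ * s t) • g t - s' t • g' t) 0 t := by
      intro t
      have hc : HasDerivAt (fun t => -δ * s t) (-δ * s' t) t := (hs t).const_mul (-δ)
      have := ((hc.smul (hg t)).sub ((hs' t).smul (hg' t)))
      convert this using 1
      · rfl
      simp only [smul_smul]
      module
    have := const_of_hasDerivAt_zero (fun t => (-δ * s t) • g t - s' t • g' t) hd t
    simpa [h0, h0', hs'0] using this
  intro t
  have e1 : s' t • g t = s t • g' t := sub_eq_zero.mp (h1 t)
  have e2 : (-δ * s t) • g t = s' t • g' t := sub_eq_zero.mp (h2 t)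
  have e3 : (s' t ^ 2) • g t = (s t * (-δ * s t)) • g t := by
    calc (s' t ^ 2) • g t = s' t • (s' t • g t) := by rw [pow_two, mul_smul]
      _ = s' t • (s t • g' t) := by rw [e1]
      _ = s t • (s' t • g' t) := smul_comm _ _ _
      _ = s t • ((-δ * s t) • g t) := by rw [e2]
      _ = (s t * (-δ * s t)) • g t := (mul_smul _ _ _).symm
  calc g t = (s' t ^ 2 + δ * s t ^ 2) • g t := by rw [hconst t, one_smul]
    _ = (s' t ^ 2) • g t + (δ * s t ^ 2) • g t := add_smul _ _ _
    _ = (s t * (-δ * s t)) • g t + (δ * s t ^ 2) • g t := by rw [e3]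
    _ = (s t * (-δ * s t) + δ * s t ^ 2) • g t := (add_smul _ _ _).symm
    _ = (0 : ℝ) • g t := by ring_nf
    _ = 0 := zero_smul _ _

set_option maxHeartbeats 1000000 in
/-- Explicit determinant of the constant-curvature comparison solution `A_δ` (from the proof of
the paper's Theorem 4.8): `det A_δ(t) = 𝔰_δ(t)^{m−k−1} ∏_α (𝔰'_δ(t) − λ_α 𝔰_δ(t))`, where the
`λ_α` are the eigenvalues (with multiplicity) of the symmetric endomorphism `S` of the
`k`-dimensional subspace `V₀`. -/
theorem det_constant_curvature_comparison
    (m k : ℕ) (hm : 2 ≤ m) (hk1 : 1 ≤ k) (hk2 : k ≤ m - 1) (δ : ℝ)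
    (V₀ : Submodule ℝ (EuclideanSpace ℝ (Fin (m - 1))))
    (hV₀ : Module.finrank ℝ V₀ = k)
    (S : V₀ →ₗ[ℝ] V₀)
    (hSsym : ∀ v w : V₀, ⟪S v, w⟫ = ⟪v, S w⟫)
    (lam : Fin k → ℝ) (b : Module.Basis (Fin k) ℝ V₀)
    (hb : ∀ i, S (b i) = lam i • b i)
    (C : V₀ →ₗ[ℝ] ↥V₀ᗮ)
    (A A' : ℝ → EuclideanSpace ℝ (Fin (m - 1)) →L[ℝ] EuclideanSpace ℝ (Fin (m - 1)))
    (hA : ∀ t, HasDerivAt A (A' t) t)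
    (hA' : ∀ t, HasDerivAt A' (-δ • A t) t)
    (hA0 : A 0 = V₀.subtypeL.comp (V₀.orthogonalProjectionOnto))
    (hA'0V : ∀ v : V₀, A' 0 (v : EuclideanSpace ℝ (Fin (m - 1))) =
      -(↑(S v) : EuclideanSpace ℝ (Fin (m - 1))) + (↑(C v) : EuclideanSpace ℝ (Fin (m - 1))))
    (hA'0perp : ∀ w ∈ V₀ᗮ, A' 0 w = w)
    (s s' : ℝ → ℝ)
    (hs : ∀ t, HasDerivAt s (s' t) t)
    (hs' : ∀ t, HasDerivAt s' (-δ * s t) t)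
    (hs0 : s 0 = 0) (hs'0 : s' 0 = 1) :
    ∀ t : ℝ, LinearMap.det (A t).toLinearMap =
      (s t) ^ (m - k - 1) * ∏ i : Fin k, (s' t - lam i * s t) := by
  set E := EuclideanSpace ℝ (Fin (m - 1))
  -- Step 1: A t = s' t • A 0 + s t • A' 0
  have hAt : ∀ t, A t = s' t • A 0 + s t • A' 0 := by
    have hzero := ode_zero_unique δ s s' hs hs' hs0 hs'0
      (fun t => A t - s' t • A 0 - s t • A' 0)
      (fun t => A' t - (-δ * s t) • A 0 - s' t • A' 0)
      (fun t => by
        have := ((hA t).sub ((hs' t).smul_const (A 0))).sub ((hs t).smul_const (A' 0))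
        exact this)
      (fun t => by
        have hc : HasDerivAt (fun t => -δ * s t) (-δ * s' t) t := (hs t).const_mul (-δ)
        have := ((hA' t).sub (hc.smul_const (A 0))).sub ((hs' t).smul_const (A' 0))
        convert this using 1
        · rfl
        simp only [smul_sub, smul_smul]
        try module)
      (by simp only [hs0, hs'0]; try module)
      (by simp only [hs0, hs'0]; try module)
    intro t
    have h := hzero t
    simp only [sub_sub, sub_eq_zero] at h
    exact h
  -- Step 2: linear algebra
  intro t
  have hcompl : IsCompl V₀ V₀ᗮ := Submodule.isCompl_orthogonal_of_hasOrthogonalProjection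
  have hrank : Module.finrank ℝ V₀ᗮ = m - 1 - k := by
    have h1 := Submodule.finrank_add_finrank_orthogonal (K := V₀)
    rw [hV₀, finrank_euclideanSpace_fin] at h1
    omega
  let b' : Module.Basis (Fin (m - 1 - k)) ℝ V₀ᗮ := Module.finBasisOfFinrankEq ℝ _ hrank
  let e : (V₀ × V₀ᗮ) ≃ₗ[ℝ] E := Submodule.prodEquivOfIsCompl V₀ V₀ᗮ hcompl
  let Bas : Module.Basis (Fin k ⊕ Fin (m - 1 - k)) ℝ E := (b.prod b').map e
  have hBasl : ∀ i, Bas (Sum.inl i) = (b i : E) := by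
    intro i
    show e (b.prod b' (Sum.inl i)) = (b i : E)
    have : b.prod b' (Sum.inl i) = (b i, 0) := by
      refine Prod.ext ?_ ?_
      · exact Module.Basis.prod_apply_inl_fst _ _ _
      · exact Module.Basis.prod_apply_inl_snd _ _ _
    rw [this]
    simp [e, Submodule.coe_prodEquivOfIsCompl']
  have hBasr : ∀ j, Bas (Sum.inr j) = (b' j : E) := by
    intro j
    show e (b.prod b' (Sum.inr j)) = (b' j : E)
    have : b.prod b' (Sum.inr j) = (0, b' j) := by
      refine Prod.ext ?_ ?_
      · exact Module.Basis.prod_apply_inr_fst _ _ _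
      · exact Module.Basis.prod_apply_inr_snd _ _ _
    rw [this]
    simp [e, Submodule.coe_prodEquivOfIsCompl']
  let M : Matrix (Fin k ⊕ Fin (m - 1 - k)) (Fin k ⊕ Fin (m - 1 - k)) ℝ :=
    Matrix.fromBlocks (Matrix.diagonal fun i => s' t - lam i * s t) 0
      (Matrix.of fun j i => s t * (b'.repr (C (b i)) j)) (s t • (1 : Matrix _ _ ℝ))
  -- values of A t on the basis
  have hAbl : ∀ i, A t (b i : E) = (s' t - lam i * s t) • (b i : E) + s t • (C (b i) : E) := by
    intro i
    have hP : A 0 (b i : E) = (b i : E) := by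
      rw [hA0]
      simp [Submodule.orthogonalProjectionOnto_mem_subspace_eq_self]
    have hQ : A' 0 (b i : E) = -((lam i) • (b i : E)) + (C (b i) : E) := by
      rw [hA'0V (b i), hb i]
      norm_num
    rw [hAt t]
    simp only [ContinuousLinearMap.add_apply, ContinuousLinearMap.coe_smul',
      Pi.smul_apply, hP, hQ]
    rw [sub_smul]
    simp only [smul_add, smul_neg, smul_smul]
    module
  have hAbr : ∀ j, A t (b' j : E) = s t • (b' j : E) := by
    intro j
    have hP : A 0 (b' j : E) = 0 := by
      rw [hA0]
      simp [Submodule.orthogonalProjectionOnto_apply_of_mem_orthogonal (b' j).2]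
    have hQ : A' 0 (b' j : E) = (b' j : E) := hA'0perp _ (b' j).2
    rw [hAt t]
    simp [hP, hQ]
  -- identify A t with the matrix M
  have hrep : (A t).toLinearMap = Matrix.toLin Bas Bas M := by
    apply Bas.ext
    intro x
    rw [Matrix.toLin_self]
    cases x with
    | inl i =>
      rw [hBasl]
      rw [Fintype.sum_sum_type]
      have hl : ∑ i' : Fin k, M (Sum.inl i') (Sum.inl i) • Bas (Sum.inl i')
          = (s' t - lam i * s t) • (b i : E) := by
        rw [Finset.sum_eq_single i]
        · rw [hBasl]
          simp [M, Matrix.diagonal_apply_eq]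
        · intro j _ hj
          simp [M, Matrix.diagonal_apply_ne _ hj]
        · intro h
          exact absurd (Finset.mem_univ i) h
      have hr : ∑ j : Fin (m - 1 - k), M (Sum.inr j) (Sum.inl i) • Bas (Sum.inr j)
          = s t • (C (b i) : E) := by
        have : (C (b i) : E) = ∑ j, b'.repr (C (b i)) j • (b' j : E) := by
          conv_lhs => rw [← b'.sum_repr (C (b i))]
          push_cast
          rfl
        rw [this, Finset.smul_sum]
        apply Finset.sum_congr rfl
        intro j _
        rw [hBasr]
        simp [M, mul_smul]
      rw [hl, hr]
      exact hAbl i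
    | inr j =>
      rw [hBasr]
      rw [Fintype.sum_sum_type]
      have hl : ∑ i : Fin k, M (Sum.inl i) (Sum.inr j) • Bas (Sum.inl i) = 0 := by
        apply Finset.sum_eq_zero
        intro i _
        simp [M]
      have hr : ∑ j' : Fin (m - 1 - k), M (Sum.inr j') (Sum.inr j) • Bas (Sum.inr j')
          = s t • (b' j : E) := by
        rw [Finset.sum_eq_single j]
        · rw [hBasr]
          simp [M, Matrix.one_apply]
        · intro j' _ hj'
          simp [M, Matrix.one_apply_ne hj']
        · intro h
          exact absurd (Finset.mem_univ j) h
      rw [hl, hr, zero_add]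
      exact hAbr j
  rw [hrep, LinearMap.det_toLin]
  rw [Matrix.det_fromBlocks_zero₁₂, Matrix.det_diagonal, Matrix.det_smul, Matrix.det_one]
  rw [show m - 1 - k = m - k - 1 by omega]
  simp [Fintype.card_fin]
  ring
end

section
/- Let (V, ⟨·,·⟩) be a real inner product space of dimension at least 2, β a continuous linear functional on V with operator norm ‖β‖ < 1, and fix v ∈ V with v ≠ 0. Then the set C_v := { n ∈ V : ⟨v,n⟩ + ‖n‖·β(v) = 0 } is a linear subspace of V if and only if β(v) = 0 (in which case C_v is the orthogonal complement of v). -/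
open scoped RealInnerProductSpace

/-- The paper's Example 3.1: in a real inner product space of dimension at least `2`, for a
continuous linear functional `β` with `‖β‖ < 1` and `v ≠ 0`, the normal cone
`C_v := {n : ⟨v, n⟩ + ‖n‖ β(v) = 0}` of the Randers norm `‖·‖ + β` is a linear subspace
iff `β(v) = 0`, in which case it is the orthogonal complement of `v`. -/
theorem randers_normal_cone_subspace_iff
    (V : Type*) [NormedAddCommGroup V] [InnerProductSpace ℝ V]
    (hdim : 2 ≤ Module.rank ℝ V)
    (β : V →L[ℝ] ℝ) (hβ : ‖β‖ < 1) (v : V) (hv : v ≠ 0) :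
    ((∃ W : Submodule ℝ V, (W : Set V) = {n : V | ⟪v, n⟫ + ‖n‖ * β v = 0}) ↔ β v = 0) ∧
      (β v = 0 → {n : V | ⟪v, n⟫ + ‖n‖ * β v = 0} = ((ℝ ∙ v)ᗮ : Submodule ℝ V)) := by
  have part2 : β v = 0 → {n : V | ⟪v, n⟫ + ‖n‖ * β v = 0} = ((ℝ ∙ v)ᗮ : Submodule ℝ V) := by
    intro hb
    ext n
    simp [Submodule.mem_orthogonal_singleton_iff_inner_right, hb]
  refine ⟨⟨?_, fun hb => ⟨(ℝ ∙ v)ᗮ, (part2 hb).symm⟩⟩, part2⟩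
  rintro ⟨W, hW⟩
  by_contra hb
  -- find w not in span of v
  have hspan : (ℝ ∙ v : Submodule ℝ V) ≠ ⊤ := by
    intro h
    have h1 : Module.rank ℝ V ≤ 1 := by
      have := rank_span_le (R := ℝ) (M := V) {v}
      rw [h] at this
      simpa [rank_top] using this.trans (by simp)
    exact absurd (hdim.trans h1) (by norm_num)
  obtain ⟨w, hw⟩ : ∃ w : V, w ∉ (ℝ ∙ v : Submodule ℝ V) := by
    by_contra h
    push_neg at h
    exact hspan (Submodule.eq_top_iff'.2 h)
  set c : ℝ := ‖v‖ with hc_def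
  have hc : 0 < c := norm_pos_iff.2 hv
  set b : ℝ := β v with hb_def
  -- orthogonal vector u
  set u : V := w - (⟪v, w⟫ / c ^ 2) • v with hu_def
  have huv : ⟪v, u⟫ = 0 := by
    rw [hu_def, inner_sub_right, real_inner_smul_right, real_inner_self_eq_norm_sq]
    field_simp
    rw [hc_def]; ring
  have hu : u ≠ 0 := by
    intro h
    exact hw (Submodule.mem_span_singleton.2 ⟨⟪v, w⟫ / c ^ 2, (sub_eq_zero.mp h).symm⟩)
  have hun : 0 < ‖u‖ := norm_pos_iff.2 hu
  -- bound on b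
  have hbc : b ^ 2 < c ^ 2 := by
    have h1 : |b| ≤ ‖β‖ * c := by
      simpa [hb_def, hc_def] using β.le_opNorm v
    have h2 : ‖β‖ * c < 1 * c := by
      apply mul_lt_mul_of_pos_right hβ hc
    have h3 : |b| < c := by linarith
    calc b ^ 2 = |b| ^ 2 := (sq_abs b).symm
    _ < c ^ 2 := by
        apply pow_lt_pow_left₀ h3 (abs_nonneg b)
        norm_num
  set s : ℝ := Real.sqrt (c ^ 2 - b ^ 2) with hs_def
  have hs2 : s ^ 2 = c ^ 2 - b ^ 2 := Real.sq_sqrt (by linarith)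
  have hs : 0 < s := Real.sqrt_pos.2 (by linarith)
  -- the witness
  set u₀ : V := ‖u‖⁻¹ • u with hu0_def
  set v₀ : V := ‖v‖⁻¹ • v with hv0_def
  have hu0 : ‖u₀‖ = 1 := norm_smul_inv_norm hu
  have hv0 : ‖v₀‖ = 1 := norm_smul_inv_norm hv
  set n : V := s • u₀ - b • v₀ with hn_def
  have hinner_uv : ⟪s • u₀, b • v₀⟫ = 0 := by
    rw [real_inner_smul_left, real_inner_smul_right, hu0_def, hv0_def,
      real_inner_smul_left, real_inner_smul_right]
    have : ⟪u, v⟫ = 0 := by rw [real_inner_comm]; exact huv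
    rw [this]; ring
  have h2 : ‖s • u₀‖ = s := by
    rw [norm_smul, hu0, Real.norm_eq_abs, abs_of_pos hs, mul_one]
  have h3 : ‖b • v₀‖ = |b| := by
    rw [norm_smul, hv0, Real.norm_eq_abs, mul_one]
  have hn_norm : ‖n‖ = c := by
    have h1 : ‖n‖ ^ 2 = c ^ 2 := by
      rw [hn_def, norm_sub_sq_real, hinner_uv, h2, h3, sq_abs, hs2]
      ring
    calc ‖n‖ = Real.sqrt (‖n‖ ^ 2) := (Real.sqrt_sq (norm_nonneg n)).symm
    _ = Real.sqrt (c ^ 2) := by rw [h1]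
    _ = c := Real.sqrt_sq hc.le
  have h4 : ⟪v, u₀⟫ = 0 := by
    rw [hu0_def, real_inner_smul_right, huv, mul_zero]
  have h5 : ⟪v, v₀⟫ = c := by
    rw [hv0_def, real_inner_smul_right, real_inner_self_eq_norm_sq]
    field_simp
    rw [hc_def]
  have hvn : ⟪v, n⟫ = -(b * c) := by
    simp only [hn_def, inner_sub_right, real_inner_smul_right, h4, h5]
    ring
  -- n is in the set, hence in W, hence -n in W, hence -n in the set
  have hn_mem : n ∈ (W : Set V) := by
    rw [hW]
    simp only [Set.mem_setOf_eq]
    rw [hvn, hn_norm]; ring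
  have hnegn_mem : -n ∈ (W : Set V) := W.neg_mem hn_mem
  rw [hW] at hnegn_mem
  simp only [Set.mem_setOf_eq, inner_neg_right, norm_neg] at hnegn_mem
  rw [hvn, hn_norm] at hnegn_mem
  have : b * c = 0 := by linarith
  rcases mul_eq_zero.mp this with h | h
  · exact hb h
  · exact hc.ne' h
end
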